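/- Every k-tree admits an acyclic vertex colouring with k+1 colours; that is, a proper (k+1)-colouring in which the union of any two colour classes induces a forest. -/

import Mathlib

/-- A `k`-tree, defined via a construction ordering: the first `k+1` vertices form a
clique, and each later vertex's neighbourhood among earlier vertices is a `k`-clique. -/
def IsKTree {V : Type*} [Finite V] (k : ℕ) (G : SimpleGraph V) : Prop :=
  k + 1 ≤ Nat.card V ∧
  ∃ σ : Fin (Nat.card V) ≃ V,
    ∀ i : Fin (Nat.card V),
      (((i : ℕ) ≤ k) →
        {u | G.Adj (σ i) u ∧ ((σ.symm u : Fin (Nat.card V)) : ℕ) < (i : ℕ)} =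
          {u | ((σ.symm u : Fin (Nat.card V)) : ℕ) < (i : ℕ)}) ∧
      (k < (i : ℕ) →
        ({u | G.Adj (σ i) u ∧ ((σ.symm u : Fin (Nat.card V)) : ℕ) < (i : ℕ)}.ncard = k ∧
          G.IsClique {u | G.Adj (σ i) u ∧ ((σ.symm u : Fin (Nat.card V)) : ℕ) < (i : ℕ)}))

lemma acyclic_of_back {W : Type*} (H : SimpleGraph W) (f : W → ℕ) (hf : Function.Injective f)
    (hb : ∀ v, {u | H.Adj v u ∧ f u < f v}.Subsingleton) : H.IsAcyclic := by
  classical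
  have key : ∀ (w : W) (q : H.Walk w w), q.IsCycle →
      (∀ u ∈ q.support, u ≠ w → f u < f w) → False := by
    intro w q hq hlt
    cases q with
    | nil => exact hq.ne_nil rfl
    | cons had r =>
      rename_i x
      have hxw : x ≠ w := had.ne'
      obtain ⟨y, hady, r2, hr⟩ := SimpleGraph.Walk.exists_eq_cons_of_ne (Ne.symm hxw) r.reverse
      have hy_edge : s(w, y) ∈ r.edges := by
        have : s(w, y) ∈ r.reverse.edges := by rw [hr]; simp
        rwa [SimpleGraph.Walk.edges_reverse, List.mem_reverse] at this
      have hy_sup : y ∈ r.support := r.snd_mem_support_of_mem_edges hy_edge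
      have hx_sup : x ∈ (SimpleGraph.Walk.cons had r).support := by simp
      have hy_sup' : y ∈ (SimpleGraph.Walk.cons had r).support := by simp [hy_sup]
      have hxy : x = y :=
        hb w ⟨had, hlt x hx_sup hxw⟩ ⟨hady, hlt y hy_sup' hady.ne'⟩
      have hnodup := hq.edges_nodup
      rw [SimpleGraph.Walk.edges_cons] at hnodup
      exact (List.nodup_cons.mp hnodup).1 (hxy ▸ hy_edge)
  intro v p hp
  have hsupne : p.support.toFinset.Nonempty := by
    simp [List.toFinset_nonempty_iff]
  obtain ⟨w, hw, hmax⟩ := p.support.toFinset.exists_max_image f hsupne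
  rw [List.mem_toFinset] at hw
  refine key w (p.rotate w hw) (hp.rotate hw) ?_
  intro u hu hne
  have hup : u ∈ p.support := by
    rw [(p.rotate w hw).support_eq_cons, List.mem_cons] at hu
    rcases hu with h | h
    · exact h ▸ hw
    · exact List.mem_of_mem_tail ((SimpleGraph.Walk.support_rotate p w hw).mem_iff.mp h)
  exact lt_of_le_of_ne (hmax u (List.mem_toFinset.mpr hup)) (fun h => hne (hf h))

open Classical in
noncomputable def ktcol {V : Type*} [Finite V] (k : ℕ) (G : SimpleGraph V)
    (σ : Fin (Nat.card V) ≃ V) (m : ℕ) : Fin (k + 1) :=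
  if h : k < m ∧ m < Nat.card V then
    if hex : ∃ a : Fin (k + 1),
        ∀ u : {u // G.Adj (σ ⟨m, h.2⟩) u ∧ ((σ.symm u : Fin (Nat.card V)) : ℕ) < m},
          ktcol k G σ ((σ.symm u.1 : Fin (Nat.card V)) : ℕ) ≠ a then
      Classical.choose hex
    else ⟨0, k.succ_pos⟩
  else ⟨min m k, by omega⟩
termination_by m
decreasing_by all_goals exact u.2.2

lemma exists_unused {k : ℕ} {α : Type*} (S : Set α) (hS : S.ncard = k) (hfin : S.Finite)
    (f : α → Fin (k + 1)) : ∃ a : Fin (k + 1), ∀ u : S, f u.1 ≠ a := by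
  by_contra hc
  push_neg at hc
  have hsub : (Set.univ : Set (Fin (k + 1))) ⊆ f '' S := by
    intro a _
    obtain ⟨u, hu⟩ := hc a
    exact ⟨u.1, u.2, hu⟩
  have h1 : k + 1 ≤ (f '' S).ncard := by
    calc k + 1 = (Set.univ : Set (Fin (k + 1))).ncard := by
          simp [Set.ncard_univ, Nat.card_eq_fintype_card]
      _ ≤ (f '' S).ncard := Set.ncard_le_ncard hsub (hfin.image f)
  have h2 : (f '' S).ncard ≤ k := le_trans (Set.ncard_image_le hfin) hS.le
  omega

section
variable {V : Type*} [Finite V] {k : ℕ} {G : SimpleGraph V} (σ : Fin (Nat.card V) ≃ V)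

lemma ktcol_base (m : ℕ) (hm : ¬(k < m ∧ m < Nat.card V)) :
    ktcol k G σ m = ⟨min m k, by omega⟩ := by
  rw [ktcol, dif_neg hm]

lemma ktcol_proper
    (hσ : ∀ i : Fin (Nat.card V), k < (i : ℕ) →
      {u | G.Adj (σ i) u ∧ ((σ.symm u : Fin (Nat.card V)) : ℕ) < (i : ℕ)}.ncard = k)
    {v u : V} (hadj : G.Adj v u)
    (hlt : ((σ.symm u : Fin (Nat.card V)) : ℕ) < ((σ.symm v : Fin (Nat.card V)) : ℕ)) :
    ktcol k G σ ((σ.symm u : Fin (Nat.card V)) : ℕ) ≠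
      ktcol k G σ ((σ.symm v : Fin (Nat.card V)) : ℕ) := by
  have hmlt : ((σ.symm v : Fin (Nat.card V)) : ℕ) < Nat.card V := (σ.symm v).isLt
  have hv : σ ⟨((σ.symm v : Fin (Nat.card V)) : ℕ), hmlt⟩ = v := by
    rw [Fin.eta]; exact σ.apply_symm_apply v
  by_cases hkm : k < ((σ.symm v : Fin (Nat.card V)) : ℕ)
  · conv_rhs => rw [ktcol]
    rw [dif_pos ⟨hkm, hmlt⟩]
    have hex : ∃ a : Fin (k + 1),
        ∀ w : {u // G.Adj (σ ⟨((σ.symm v : Fin (Nat.card V)) : ℕ),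
            (⟨hkm, hmlt⟩ : _ ∧ _).2⟩) u ∧
            ((σ.symm u : Fin (Nat.card V)) : ℕ) < ((σ.symm v : Fin (Nat.card V)) : ℕ)},
          ktcol k G σ ((σ.symm w.1 : Fin (Nat.card V)) : ℕ) ≠ a := by
      exact exists_unused _ (hσ ⟨_, hmlt⟩ hkm) (Set.toFinite _)
        (fun w => ktcol k G σ ((σ.symm w : Fin (Nat.card V)) : ℕ))
    rw [dif_pos hex]
    exact Classical.choose_spec hex ⟨u, show G.Adj (σ ⟨_, hmlt⟩) u by rw [hv]; exact hadj, hlt⟩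
  · push_neg at hkm
    rw [ktcol_base σ _ (by omega), ktcol_base σ _ (by omega)]
    simp only [ne_eq, Fin.mk.injEq]
    omega

lemma ktcol_back_unique
    (hσ : ∀ i : Fin (Nat.card V), k < (i : ℕ) →
      ({u | G.Adj (σ i) u ∧ ((σ.symm u : Fin (Nat.card V)) : ℕ) < (i : ℕ)}.ncard = k ∧
        G.IsClique {u | G.Adj (σ i) u ∧ ((σ.symm u : Fin (Nat.card V)) : ℕ) < (i : ℕ)}))
    (v : V) (a : Fin (k + 1)) :
    {u | G.Adj v u ∧ ((σ.symm u : Fin (Nat.card V)) : ℕ) < ((σ.symm v : Fin (Nat.card V)) : ℕ) ∧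
      ktcol k G σ ((σ.symm u : Fin (Nat.card V)) : ℕ) = a}.Subsingleton := by
  intro u1 hu1 u2 hu2
  by_contra hne
  have hidx : ((σ.symm u1 : Fin (Nat.card V)) : ℕ) ≠ ((σ.symm u2 : Fin (Nat.card V)) : ℕ) := by
    intro h
    exact hne (σ.symm.injective (Fin.ext h))
  have hmlt : ((σ.symm v : Fin (Nat.card V)) : ℕ) < Nat.card V := (σ.symm v).isLt
  have hv : σ ⟨((σ.symm v : Fin (Nat.card V)) : ℕ), hmlt⟩ = v := by
    rw [Fin.eta]; exact σ.apply_symm_apply v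
  by_cases hkm : k < ((σ.symm v : Fin (Nat.card V)) : ℕ)
  · have hclique := (hσ ⟨_, hmlt⟩ hkm).2
    have hadj : G.Adj u1 u2 := by
      refine hclique ?_ ?_ hne
      · exact ⟨by rw [hv]; exact hu1.1, hu1.2.1⟩
      · exact ⟨by rw [hv]; exact hu2.1, hu2.2.1⟩
    have hP := fun i hi => (hσ i hi).1
    rcases lt_or_gt_of_ne hidx with h | h
    · exact ktcol_proper σ hP hadj.symm h (hu1.2.2.trans hu2.2.2.symm)
    · exact ktcol_proper σ hP hadj h (hu2.2.2.trans hu1.2.2.symm)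
  · push_neg at hkm
    apply hidx
    have e1 := ktcol_base (k := k) (G := G) σ ((σ.symm u1 : Fin (Nat.card V)) : ℕ)
      (by have := hu1.2.1; omega)
    have e2 := ktcol_base (k := k) (G := G) σ ((σ.symm u2 : Fin (Nat.card V)) : ℕ)
      (by have := hu2.2.1; omega)
    have hval := congrArg Fin.val (hu1.2.2.trans hu2.2.2.symm)
    rw [e1, e2] at hval
    simp only [Fin.val_mk] at hval
    have l1 := hu1.2.1
    have l2 := hu2.2.1
    omega

end

/-- Every `k`-tree admits an acyclic `(k+1)`-colouring: a proper vertex colouring in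
which the union of any two colour classes induces a forest. -/
theorem ktree_acyclic_coloring {V : Type*} [Finite V] (k : ℕ) (hk : 1 ≤ k)
    (G : SimpleGraph V) (h : IsKTree k G) :
    ∃ c : V → Fin (k + 1),
      (∀ u v, G.Adj u v → c u ≠ c v) ∧
      ∀ i j : Fin (k + 1), (G.induce {v | c v = i ∨ c v = j}).IsAcyclic := by
  obtain ⟨hn, σ, hσ⟩ := h
  have hP : ∀ i : Fin (Nat.card V), k < (i : ℕ) →
      {u | G.Adj (σ i) u ∧ ((σ.symm u : Fin (Nat.card V)) : ℕ) < (i : ℕ)}.ncard = k :=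
    fun i hi => ((hσ i).2 hi).1
  have hσ' := fun i : Fin (Nat.card V) => (hσ i).2
  set c : V → Fin (k + 1) := fun v => ktcol k G σ ((σ.symm v : Fin (Nat.card V)) : ℕ) with hc
  have hproper : ∀ u v, G.Adj u v → c u ≠ c v := by
    intro u v hadj
    have hidx : ((σ.symm u : Fin (Nat.card V)) : ℕ) ≠ ((σ.symm v : Fin (Nat.card V)) : ℕ) :=
      fun h => hadj.ne (σ.symm.injective (Fin.ext h))
    rcases lt_or_gt_of_ne hidx with hlt | hlt
    · exact ktcol_proper σ hP hadj.symm hlt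
    · exact (ktcol_proper σ hP hadj hlt).symm
  refine ⟨c, hproper, ?_⟩
  intro a b
  apply acyclic_of_back _ (fun w : {v | c v = a ∨ c v = b} =>
    ((σ.symm w.1 : Fin (Nat.card V)) : ℕ))
  · intro w1 w2 hw
    exact Subtype.ext (σ.symm.injective (Fin.ext hw))
  · intro w u1 hu1 u2 hu2
    have hadj1 : G.Adj w.1 u1.1 := hu1.1
    have hadj2 : G.Adj w.1 u2.1 := hu2.1
    apply Subtype.ext
    rcases w.2 with hw | hw
    · have h1 : c u1.1 = b := by
        rcases u1.2 with hx | hx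
        · exact absurd (hx.trans hw.symm) (hproper _ _ hadj1.symm)
        · exact hx
      have h2 : c u2.1 = b := by
        rcases u2.2 with hx | hx
        · exact absurd (hx.trans hw.symm) (hproper _ _ hadj2.symm)
        · exact hx
      exact ktcol_back_unique σ hσ' w.1 b ⟨hadj1, hu1.2, h1⟩ ⟨hadj2, hu2.2, h2⟩
    · have h1 : c u1.1 = a := by
        rcases u1.2 with hx | hx
        · exact hx
        · exact absurd (hx.trans hw.symm) (hproper _ _ hadj1.symm)
      have h2 : c u2.1 = a := by
        rcases u2.2 with hx | hx
        · exact hx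
        · exact absurd (hx.trans hw.symm) (hproper _ _ hadj2.symm)
      exact ktcol_back_unique σ hσ' w.1 a ⟨hadj1, hu1.2, h1⟩ ⟨hadj2, hu2.2, h2⟩
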